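/- Any nontrivial solitary wave solution (u, η) of the stationary system β²η'' = η + u²/2, β²u'' = u(1+η) with (u, η) → (0,0) at ±∞ satisfies η(x) < 0 for all x ∈ ℝ. -/

import Mathlib

open Set Filter

lemma aux_secondDeriv (f : ℝ → ℝ) (hf : Continuous f) (hf' : Continuous (deriv f))
    (hf'' : Continuous (deriv (deriv f))) (x₀ : ℝ) (h : IsLocalMax f x₀) :
    deriv (deriv f) x₀ ≤ 0 := by
  by_contra hpos
  push_neg at hpos
  have hopen : IsOpen {x | 0 < deriv (deriv f) x} := isOpen_lt continuous_const hf''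
  obtain ⟨δ, hδ, hball⟩ := Metric.mem_nhds_iff.mp (hopen.mem_nhds hpos)
  obtain ⟨δ', hδ', hball'⟩ := Metric.eventually_nhds_iff_ball.mp h
  set ε := min δ δ' / 2 with hε
  have hεpos : 0 < ε := by positivity
  have hεδ : ε < δ := by
    have := min_le_left δ δ'; simp only [hε]; linarith
  have hεδ' : ε < δ' := by
    have := min_le_right δ δ'; simp only [hε]; linarith
  have hmono1 : StrictMonoOn (deriv f) (Icc x₀ (x₀+ε)) := by
    apply strictMonoOn_of_deriv_pos (convex_Icc _ _) hf'.continuousOn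
    intro x hx
    rw [interior_Icc] at hx
    apply hball
    rw [Metric.mem_ball, Real.dist_eq, abs_lt]
    constructor <;> [linarith [hx.1]; linarith [hx.2]]
  have hd0 : deriv f x₀ = 0 := h.deriv_eq_zero
  have hmono2 : StrictMonoOn f (Icc x₀ (x₀+ε)) := by
    apply strictMonoOn_of_deriv_pos (convex_Icc _ _) hf.continuousOn
    intro x hx
    rw [interior_Icc] at hx
    have := hmono1 (left_mem_Icc.mpr (by linarith)) ⟨hx.1.le, hx.2.le⟩ hx.1
    linarith
  have h1 : f x₀ < f (x₀ + ε) :=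
    hmono2 (left_mem_Icc.mpr (by linarith)) (right_mem_Icc.mpr (by linarith)) (by linarith)
  have h2 : f (x₀ + ε) ≤ f x₀ := by
    apply hball'
    rw [Metric.mem_ball, Real.dist_eq, abs_lt]
    constructor <;> linarith
  linarith

lemma aux_arith (A u v p q : ℝ) (hA : 0 ≤ A) (hu : |u| ≤ A) (hv : |v| ≤ A) :
    |2*u*p*(2+v) + 4*v*q + u^2*q| ≤ (4+2*A)*(u^2+v^2+p^2+q^2) := by
  obtain ⟨hu1, hu2⟩ := abs_le.mp hu
  obtain ⟨hv1, hv2⟩ := abs_le.mp hv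
  rw [abs_le]
  constructor <;>
  nlinarith [sq_nonneg (u-p), sq_nonneg (u+p), sq_nonneg (v-q), sq_nonneg (v+q),
    mul_nonneg (sub_nonneg.2 hv2) (sq_nonneg (u-p)),
    mul_nonneg (by linarith : (0:ℝ) ≤ A + v) (sq_nonneg (u+p)),
    mul_nonneg (sub_nonneg.2 hv2) (sq_nonneg (u+p)),
    mul_nonneg (by linarith : (0:ℝ) ≤ A + v) (sq_nonneg (u-p)),
    mul_nonneg (sub_nonneg.2 hu2) (sq_nonneg (u-q)),
    mul_nonneg (by linarith : (0:ℝ) ≤ A + u) (sq_nonneg (u+q)),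
    mul_nonneg (sub_nonneg.2 hu2) (sq_nonneg (u+q)),
    mul_nonneg (by linarith : (0:ℝ) ≤ A + u) (sq_nonneg (u-q))]

lemma aux_gronwall (g g' : ℝ → ℝ) (K : ℝ) (x₀ b : ℝ)
    (hg : ∀ x, HasDerivAt g (g' x) x) (hgnn : ∀ x, 0 ≤ g x) (h0 : g x₀ = 0)
    (hb : ∀ x ∈ Icc x₀ b, |g' x| ≤ K * g x) : ∀ x ∈ Icc x₀ b, g x = 0 := by
  intro x hx
  have hcont : ContinuousOn g (Icc x₀ b) :=
    (fun y _ => ((hg y).differentiableAt.continuousAt).continuousWithinAt)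
  have key := norm_le_gronwallBound_of_norm_deriv_right_le (δ := 0) (K := K) (ε := 0)
    hcont (fun y _ => (hg y).hasDerivWithinAt) (by simp [h0]) ?_ x hx
  · rw [gronwallBound_ε0_δ0] at key
    exact le_antisymm (by simpa [Real.norm_eq_abs, abs_of_nonneg (hgnn x)] using key) (hgnn x)
  · intro y hy
    have := hb y ⟨hy.1, hy.2.le⟩
    simpa [Real.norm_eq_abs, abs_of_nonneg (hgnn y)] using this

theorem stmt_2 (β : ℝ) (hβ : 0 < β)
    (u η : ℝ → ℝ)
    (hu : ContDiff ℝ 2 u) (hη : ContDiff ℝ 2 η)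
    (heqη : ∀ x, β^2 * deriv (deriv η) x = η x + (u x)^2 / 2)
    (hequ : ∀ x, β^2 * deriv (deriv u) x = u x * (1 + η x))
    (hu0 : Filter.Tendsto u (Filter.cocompact ℝ) (nhds 0))
    (hu0' : Filter.Tendsto (deriv u) (Filter.cocompact ℝ) (nhds 0))
    (hη0 : Filter.Tendsto η (Filter.cocompact ℝ) (nhds 0))
    (hη0' : Filter.Tendsto (deriv η) (Filter.cocompact ℝ) (nhds 0))
    (hnontriv : ¬ (∀ x, u x = 0 ∧ η x = 0)) :
    ∀ x : ℝ, η x < 0 := by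
  have hreg : ∀ f : ℝ → ℝ, ContDiff ℝ 2 f →
      Differentiable ℝ f ∧ Differentiable ℝ (deriv f) ∧ Continuous (deriv (deriv f)) := by
    intro f hf
    have h1 : ContDiff ℝ (1+1) f := by norm_num at hf ⊢; exact hf
    rw [contDiff_succ_iff_deriv] at h1
    exact ⟨h1.1, (contDiff_one_iff_deriv.mp h1.2.2).1, (contDiff_one_iff_deriv.mp h1.2.2).2⟩
  obtain ⟨hud, hud', hud''⟩ := hreg u hu
  obtain ⟨hηd, hηd', hηd''⟩ := hreg η hη
  have hβ2 : 0 < β^2 := by positivity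
  have hD1 : ∀ x, HasDerivAt u (deriv u x) x := fun x => (hud x).hasDerivAt
  have hD2 : ∀ x, HasDerivAt (deriv u) (deriv (deriv u) x) x := fun x => (hud' x).hasDerivAt
  have hD3 : ∀ x, HasDerivAt η (deriv η x) x := fun x => (hηd x).hasDerivAt
  have hD4 : ∀ x, HasDerivAt (deriv η) (deriv (deriv η) x) x := fun x => (hηd' x).hasDerivAt
  -- First integral F ≡ 0
  set F : ℝ → ℝ := fun x => β^2*(deriv u x)^2 + β^2*(deriv η x)^2 - (u x)^2*(1+η x) - (η x)^2
    with hFdef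
  have hFD : ∀ x, HasDerivAt F 0 x := by
    intro x
    have e1 : HasDerivAt (fun x => β^2*(deriv u x)^2) (β^2*(2*deriv u x*deriv (deriv u) x)) x := by
      simpa [mul_comm, mul_assoc, mul_left_comm] using (((hD2 x).pow 2).const_mul (β^2))
    have e2 : HasDerivAt (fun x => β^2*(deriv η x)^2) (β^2*(2*deriv η x*deriv (deriv η) x)) x := by
      simpa [mul_comm, mul_assoc, mul_left_comm] using (((hD4 x).pow 2).const_mul (β^2))
    have e3 : HasDerivAt (fun x => (u x)^2*(1+η x))
        ((2*u x*deriv u x)*(1+η x) + (u x)^2*deriv η x) x := by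
      have := ((hD1 x).fun_pow 2).fun_mul ((hasDerivAt_const x (1:ℝ)).fun_add (hD3 x))
      simpa [mul_comm, mul_assoc, mul_left_comm] using this
    have e4 : HasDerivAt (fun x => (η x)^2) (2*η x*deriv η x) x := by
      simpa [mul_comm] using (hD3 x).fun_pow 2
    have hbig := ((e1.add e2).sub e3).sub e4
    have hz : β^2*(2*deriv u x*deriv (deriv u) x) + β^2*(2*deriv η x*deriv (deriv η) x)
        - ((2*u x*deriv u x)*(1+η x) + (u x)^2*deriv η x) - 2*η x*deriv η x = 0 := by
      linear_combination 2*deriv u x*(hequ x) + 2*deriv η x*(heqη x)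
    rw [hFdef]
    exact hz ▸ hbig
  have hFdiff : Differentiable ℝ F := fun x => (hFD x).differentiableAt
  have hFconst := is_const_of_deriv_eq_zero hFdiff (fun x => (hFD x).deriv)
  have hFt : Tendsto F (Filter.cocompact ℝ) (nhds 0) := by
    have h : Tendsto (fun x => β^2*(deriv u x)^2 + β^2*(deriv η x)^2 - (u x)^2*(1+η x) - (η x)^2)
        (Filter.cocompact ℝ) (nhds (β^2*(0:ℝ)^2 + β^2*(0:ℝ)^2 - (0:ℝ)^2*(1+0) - (0:ℝ)^2)) :=
      ((((hu0'.pow 2).const_mul (β^2)).add ((hη0'.pow 2).const_mul (β^2))).sub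
        ((hu0.pow 2).mul (tendsto_const_nhds.add hη0))).sub (hη0.pow 2)
    have hval : (β^2*(0:ℝ)^2 + β^2*(0:ℝ)^2 - (0:ℝ)^2*(1+0) - (0:ℝ)^2) = 0 := by norm_num
    rw [hFdef]
    exact hval ▸ h
  have hF0 : ∀ x, F x = 0 := by
    intro x
    have h1 : Tendsto (fun _ : ℝ => F x) (Filter.cocompact ℝ) (nhds 0) :=
      Filter.Tendsto.congr (fun y => hFconst y x) hFt
    exact tendsto_nhds_unique tendsto_const_nhds h1
  -- the energy g and its derivative
  set g : ℝ → ℝ := fun x => (u x)^2 + (η x)^2 + β^2*(deriv u x)^2 + β^2*(deriv η x)^2 with hgdef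
  have hgnn : ∀ x, 0 ≤ g x := by
    intro x; rw [hgdef]; positivity
  have hgeq : ∀ x, g x = (u x)^2 + (η x)^2 + β^2*(deriv u x)^2 + β^2*(deriv η x)^2 :=
    fun x => rfl
  set G : ℝ → ℝ := fun x => 2*u x*deriv u x*(2+η x) + 4*η x*deriv η x + (u x)^2*deriv η x
    with hGdef
  have hgD : ∀ x, HasDerivAt g (G x) x := by
    intro x
    have e1 : HasDerivAt (fun x => (u x)^2) (2*u x*deriv u x) x := by
      simpa [mul_comm] using (hD1 x).fun_pow 2
    have e2 : HasDerivAt (fun x => (η x)^2) (2*η x*deriv η x) x := by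
      simpa [mul_comm] using (hD3 x).fun_pow 2
    have e3 : HasDerivAt (fun x => β^2*(deriv u x)^2) (β^2*(2*deriv u x*deriv (deriv u) x)) x := by
      simpa [mul_comm, mul_assoc, mul_left_comm] using (((hD2 x).pow 2).const_mul (β^2))
    have e4 : HasDerivAt (fun x => β^2*(deriv η x)^2) (β^2*(2*deriv η x*deriv (deriv η) x)) x := by
      simpa [mul_comm, mul_assoc, mul_left_comm] using (((hD4 x).pow 2).const_mul (β^2))
    have hbig := ((e1.add e2).add e3).add e4
    have hz : 2*u x*deriv u x + 2*η x*deriv η x + β^2*(2*deriv u x*deriv (deriv u) x)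
        + β^2*(2*deriv η x*deriv (deriv η) x) = G x := by
      rw [hGdef]
      linear_combination 2*deriv u x*(hequ x) + 2*deriv η x*(heqη x)
    rw [hgdef]
    exact hz ▸ hbig
  -- η ≤ 0 everywhere
  have hle : ∀ x, η x ≤ 0 := by
    by_contra hc
    push_neg at hc
    obtain ⟨x₁, hx₁⟩ := hc
    have hev : ∀ᶠ x in Filter.cocompact ℝ, |η x| < η x₁ := by
      have h := hη0 (Metric.ball_mem_nhds (0:ℝ) hx₁)
      filter_upwards [h] with x hx
      simpa [Real.norm_eq_abs] using mem_ball_zero_iff.mp hx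
    obtain ⟨Kc, hKc, hKcp⟩ := (Filter.hasBasis_cocompact).eventually_iff.mp hev
    obtain ⟨x₀, hx₀S, hx₀max⟩ := (hKc.insert x₁).exists_isMaxOn (insert_nonempty _ _)
      (hη.continuous.continuousOn)
    have hx₁le : η x₁ ≤ η x₀ := hx₀max (mem_insert _ _)
    have hglobal : IsMaxOn η univ x₀ := by
      intro y _
      simp only [Set.mem_setOf_eq]
      by_cases hy : y ∈ Kc
      · exact hx₀max (mem_insert_of_mem _ hy)
      · have h1 : |η y| < η x₁ := hKcp (by simpa using hy)
        have := le_abs_self (η y)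
        linarith
    have hloc : IsLocalMax η x₀ := hglobal.isLocalMax univ_mem
    have h2d : deriv (deriv η) x₀ ≤ 0 :=
      aux_secondDeriv η hη.continuous hηd'.continuous hηd'' x₀ hloc
    have heq := heqη x₀
    have hx₀pos : 0 < η x₀ := lt_of_lt_of_le hx₁ hx₁le
    nlinarith [sq_nonneg (u x₀)]
  -- strict negativity
  intro z0
  by_contra hcon
  push_neg at hcon
  have hz0 : η z0 = 0 := le_antisymm (hle z0) hcon
  have hglobal : IsMaxOn η univ z0 := by
    intro y _
    simp only [Set.mem_setOf_eq, hz0]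
    exact hle y
  have hloc : IsLocalMax η z0 := hglobal.isLocalMax univ_mem
  have h2d : deriv (deriv η) z0 ≤ 0 :=
    aux_secondDeriv η hη.continuous hηd'.continuous hηd'' z0 hloc
  have hηd0 : deriv η z0 = 0 := hloc.deriv_eq_zero
  have huz0 : u z0 = 0 := by
    have heq := heqη z0
    have hsq : (u z0)^2 ≤ 0 := by nlinarith
    exact sq_eq_zero_iff.mp (le_antisymm hsq (sq_nonneg _))
  have hud0 : deriv u z0 = 0 := by
    have h := hF0 z0
    rw [hFdef] at h
    simp only [hz0, huz0, hηd0] at h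
    have hsq : (deriv u z0)^2 ≤ 0 := by nlinarith
    exact sq_eq_zero_iff.mp (le_antisymm hsq (sq_nonneg _))
  have hgz0 : g z0 = 0 := by
    rw [hgdef]; simp [hz0, huz0, hud0, hηd0]
  -- propagate g ≡ 0 by Gronwall
  have hzero : ∀ z, g z = 0 := by
    intro z
    set a := z0 - |z - z0| - 1 with ha
    set b := z0 + |z - z0| + 1 with hb
    have habs1 := abs_nonneg (z - z0)
    have habs2 := le_abs_self (z - z0)
    have habs3 := neg_abs_le (z - z0)
    have haz0 : a ≤ z0 := by rw [ha]; linarith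
    have hz0b : z0 ≤ b := by rw [hb]; linarith
    have haz : a ≤ z := by rw [ha]; linarith
    have hzb : z ≤ b := by rw [hb]; linarith
    obtain ⟨Cu, hCu⟩ := (isCompact_Icc (a := a) (b := b)).exists_bound_of_continuousOn
      (hu.continuous.continuousOn)
    obtain ⟨Cη, hCη⟩ := (isCompact_Icc (a := a) (b := b)).exists_bound_of_continuousOn
      (hη.continuous.continuousOn)
    set A := max 0 (max Cu Cη) with hA
    have hA0 : (0:ℝ) ≤ A := le_max_left _ _
    have hAu : ∀ y ∈ Icc a b, |u y| ≤ A := by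
      intro y hy
      have := hCu y hy
      rw [Real.norm_eq_abs] at this
      exact this.trans ((le_max_left _ _).trans (le_max_right _ _))
    have hAη : ∀ y ∈ Icc a b, |η y| ≤ A := by
      intro y hy
      have := hCη y hy
      rw [Real.norm_eq_abs] at this
      exact this.trans ((le_max_right _ _).trans (le_max_right _ _))
    set K := (4+2*A)*(β^2+1)/β^2 with hK
    have hbound : ∀ y ∈ Icc a b, |G y| ≤ K * g y := by
      intro y hy
      have h1 := aux_arith A (u y) (η y) (deriv u y) (deriv η y) hA0 (hAu y hy) (hAη y hy)
      have h2 : β^2*((u y)^2+(η y)^2+(deriv u y)^2+(deriv η y)^2) ≤ (β^2+1) * g y := by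
        rw [hgeq y]
        nlinarith [sq_nonneg (u y), sq_nonneg (η y),
          mul_nonneg (mul_nonneg hβ2.le hβ2.le) (sq_nonneg (deriv u y)),
          mul_nonneg (mul_nonneg hβ2.le hβ2.le) (sq_nonneg (deriv η y))]
      have h3 : (u y)^2+(η y)^2+(deriv u y)^2+(deriv η y)^2 ≤ (β^2+1)*g y/β^2 := by
        rw [le_div_iff₀ hβ2]; linarith
      calc |G y| ≤ (4+2*A)*((u y)^2+(η y)^2+(deriv u y)^2+(deriv η y)^2) := by
            rw [hGdef]; exact h1
        _ ≤ (4+2*A)*((β^2+1)*g y/β^2) := by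
            apply mul_le_mul_of_nonneg_left h3 (by linarith)
        _ = K * g y := by rw [hK]; ring
    rcases le_or_gt z0 z with hcase | hcase
    · exact aux_gronwall g G K z0 b hgD hgnn hgz0
        (fun x hx => hbound x ⟨haz0.trans hx.1, hx.2⟩) z ⟨hcase, hzb⟩
    · have hi : ∀ t : ℝ, HasDerivAt (fun t : ℝ => 2*z0 - t) (-1) t := by
        intro t
        simpa using (hasDerivAt_id t).const_sub (2*z0)
      have hg2D : ∀ t, HasDerivAt (fun t => g (2*z0 - t)) (-(G (2*z0 - t))) t := by
        intro t
        have h2 : HasDerivAt (fun t : ℝ => g (2*z0 - t)) (G (2*z0 - t) * (-1)) t :=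
          (hgD (2*z0 - t)).comp t (hi t)
        simpa using h2
      have h2b : ∀ t ∈ Icc z0 (2*z0 - a), |(-(G (2*z0 - t)))| ≤ K * g (2*z0 - t) := by
        intro t ht
        have hy : 2*z0 - t ∈ Icc a b := ⟨by linarith [ht.2], by linarith [ht.1]⟩
        simpa [abs_neg] using hbound _ hy
      have hres := aux_gronwall (fun t => g (2*z0 - t)) (fun t => -(G (2*z0 - t))) K z0
        (2*z0 - a) hg2D (fun t => hgnn _)
        (by show g (2*z0 - z0) = 0; rw [show 2*z0 - z0 = z0 by ring]; exact hgz0)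
        h2b (2*z0 - z) ⟨by linarith, by linarith⟩
      have : g (2*z0 - (2*z0 - z)) = 0 := hres
      rwa [show 2*z0 - (2*z0 - z) = z by ring] at this
  apply hnontriv
  intro z
  have hz := hzero z
  rw [hgeq z] at hz
  constructor
  · have : (u z)^2 ≤ 0 := by
      nlinarith [sq_nonneg (η z), mul_nonneg hβ2.le (sq_nonneg (deriv u z)),
        mul_nonneg hβ2.le (sq_nonneg (deriv η z))]
    exact sq_eq_zero_iff.mp (le_antisymm this (sq_nonneg _))
  · have : (η z)^2 ≤ 0 := by
      nlinarith [sq_nonneg (u z), mul_nonneg hβ2.le (sq_nonneg (deriv u z)),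
        mul_nonneg hβ2.le (sq_nonneg (deriv η z))]
    exact sq_eq_zero_iff.mp (le_antisymm this (sq_nonneg _))
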